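/- If a family F of m-element sets has property P, then F contains no m+1 disjointly representable sets, and consequently |F| ≤ C(2m, m). -/

import Mathlib

def DisjRep {α : Type*} {k : ℕ} (A : Fin k → Finset α) : Prop :=
  ∃ x : Fin k → α, ∀ i j, x i ∈ A j ↔ i = j


open Finset

namespace Stmt3Aux

variable {β : Type*} [Fintype β] [LinearOrder β]

/-- The function rearranging `S ∪ T` so that `S` occupies the low positions and `T` the high
positions (order-preserving within each block), identity elsewhere. -/
noncomputable def lowHighFun (S T : Finset β) (hd : Disjoint S T) : β → β := fun x =>
  if hx : x ∈ S then
    ((S ∪ T).orderIsoOfFin (card_union_of_disjoint hd)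
      (((S.orderIsoOfFin rfl).symm ⟨x, hx⟩).castAdd T.card) : β)
  else if hx' : x ∈ T then
    ((S ∪ T).orderIsoOfFin (card_union_of_disjoint hd)
      (((T.orderIsoOfFin rfl).symm ⟨x, hx'⟩).natAdd S.card) : β)
  else x

lemma lowHighFun_mem {S T : Finset β} (hd : Disjoint S T) {x : β} (hx : x ∈ S ∪ T) :
    lowHighFun S T hd x ∈ S ∪ T := by
  unfold lowHighFun
  rcases mem_union.1 hx with h | h
  · rw [dif_pos h]; exact coe_mem _
  · rw [dif_neg (fun hS => (Finset.disjoint_left.1 hd) hS h), dif_pos h]; exact coe_mem _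

lemma lowHighFun_not_mem {S T : Finset β} (hd : Disjoint S T) {x : β} (hx : x ∉ S ∪ T) :
    lowHighFun S T hd x = x := by
  unfold lowHighFun
  rw [dif_neg (fun h => hx (mem_union_left _ h)), dif_neg (fun h => hx (mem_union_right _ h))]

lemma lowHighFun_injective (S T : Finset β) (hd : Disjoint S T) :
    Function.Injective (lowHighFun S T hd) := by
  intro x y hxy
  by_cases hxU : x ∈ S ∪ T
  · by_cases hyU : y ∈ S ∪ T
    · -- both in union: case on S/T membership
      unfold lowHighFun at hxy
      rcases mem_union.1 hxU with hx | hx <;> rcases mem_union.1 hyU with hy | hy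
      · rw [dif_pos hx, dif_pos hy] at hxy
        have h2 := (S.orderIsoOfFin rfl).symm.injective
          (Fin.castAdd_injective _ _ (((S ∪ T).orderIsoOfFin _).injective
            (Subtype.coe_injective hxy)))
        exact congrArg Subtype.val h2
      · rw [dif_pos hx, dif_neg (fun h => (Finset.disjoint_left.1 hd) h hy), dif_pos hy] at hxy
        have := ((S ∪ T).orderIsoOfFin _).injective (Subtype.coe_injective hxy)
        have hval := congrArg Fin.val this
        simp only [Fin.coe_castAdd, Fin.coe_natAdd] at hval
        have := (((S.orderIsoOfFin rfl).symm ⟨x, hx⟩)).isLt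
        omega
      · rw [dif_neg (fun h => (Finset.disjoint_left.1 hd) h hx), dif_pos hx, dif_pos hy] at hxy
        have := ((S ∪ T).orderIsoOfFin _).injective (Subtype.coe_injective hxy)
        have hval := congrArg Fin.val this
        simp only [Fin.coe_castAdd, Fin.coe_natAdd] at hval
        have := (((S.orderIsoOfFin rfl).symm ⟨y, hy⟩)).isLt
        omega
      · rw [dif_neg (fun h => (Finset.disjoint_left.1 hd) h hx), dif_pos hx,
          dif_neg (fun h => (Finset.disjoint_left.1 hd) h hy), dif_pos hy] at hxy
        have h1 := ((S ∪ T).orderIsoOfFin _).injective (Subtype.coe_injective hxy)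
        have hval := congrArg Fin.val h1
        simp only [Fin.coe_natAdd] at hval
        have h2 : ((T.orderIsoOfFin rfl).symm ⟨x, hx⟩) = ((T.orderIsoOfFin rfl).symm ⟨y, hy⟩) :=
          Fin.ext (by omega)
        exact congrArg Subtype.val ((T.orderIsoOfFin rfl).symm.injective h2)
    · exact absurd (lowHighFun_not_mem hd hyU ▸ hxy ▸ lowHighFun_mem hd hxU) hyU
  · by_cases hyU : y ∈ S ∪ T
    · exact absurd (lowHighFun_not_mem hd hxU ▸ hxy.symm ▸ lowHighFun_mem hd hyU) hxU
    · rw [lowHighFun_not_mem hd hxU, lowHighFun_not_mem hd hyU] at hxy; exact hxy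

end Stmt3Aux
set_option linter.unusedSectionVars false

namespace Stmt3Aux

variable {β : Type*} [Fintype β] [LinearOrder β]

/-- The permutation version of `lowHighFun`. -/
noncomputable def sortPerm (S T : Finset β) (hd : Disjoint S T) : Equiv.Perm β :=
  Equiv.ofBijective _ (Finite.injective_iff_bijective.1 (lowHighFun_injective S T hd))

lemma sortPerm_apply (S T : Finset β) (hd : Disjoint S T) (x : β) :
    sortPerm S T hd x = lowHighFun S T hd x := rfl

lemma sortPerm_lt {S T : Finset β} (hd : Disjoint S T) {x y : β} (hx : x ∈ S) (hy : y ∈ T) :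
    sortPerm S T hd x < sortPerm S T hd y := by
  rw [sortPerm_apply, sortPerm_apply]
  unfold lowHighFun
  rw [dif_pos hx, dif_neg (fun h => (Finset.disjoint_left.1 hd) h hy), dif_pos hy]
  rw [Finset.coe_orderIsoOfFin_apply, Finset.coe_orderIsoOfFin_apply,
    OrderEmbedding.lt_iff_lt, Fin.lt_def]
  simp only [Fin.coe_castAdd, Fin.coe_natAdd]
  have := (((S.orderIsoOfFin rfl).symm ⟨x, hx⟩)).isLt
  omega

/-- Core symmetric Bollobás-type inequality via the permutation/sorting argument. -/
lemma bollobas_core {m n : ℕ} (A B : Fin n → Finset β)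
    (hA : ∀ i, (A i).card = m) (hB : ∀ i, (B i).card ≤ m)
    (hd : ∀ i, Disjoint (A i) (B i))
    (hcross : ∀ i j, i ≠ j → ∃ x, x ∈ A i ∧ x ∈ B j) :
    n ≤ (2 * m).choose m := by
  classical
  set C := (2 * m).choose m with hC
  -- the "good event" for index i
  set E : Fin n → Finset (Equiv.Perm β) :=
    fun i => Finset.univ.filter (fun σ => ∀ p ∈ A i, ∀ q ∈ B i, σ p < σ q) with hE
  -- images are disjoint
  have hdImg : ∀ (i : Fin n) (σ : Equiv.Perm β),
      Disjoint ((A i).image σ) ((B i).image σ) :=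
    fun i σ => (Finset.disjoint_image σ.injective).2 (hd i)
  -- the sorting map
  set srt : Fin n → Equiv.Perm β → Equiv.Perm β :=
    fun i σ => σ.trans (sortPerm ((A i).image σ) ((B i).image σ) (hdImg i σ)) with hsrt
  -- sorting lands in E i
  have hsrtE : ∀ i σ, srt i σ ∈ E i := by
    intro i σ
    rw [hE]
    simp only [Finset.mem_filter, Finset.mem_univ, true_and]
    intro p hp q hq
    exact sortPerm_lt (hdImg i σ) (Finset.mem_image_of_mem σ hp) (Finset.mem_image_of_mem σ hq)
  -- the image of A i ∪ B i under srt i σ is the same as under σ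
  have himgV : ∀ i σ, (A i ∪ B i).image (srt i σ) = (A i ∪ B i).image σ := by
    intro i σ
    apply Finset.eq_of_subset_of_card_le
    · intro x hx
      rw [Finset.mem_image] at hx
      obtain ⟨y, hy, rfl⟩ := hx
      have : σ y ∈ (A i).image σ ∪ (B i).image σ := by
        rw [← Finset.image_union]; exact Finset.mem_image_of_mem σ hy
      have := lowHighFun_mem (hdImg i σ) this
      rw [← Finset.image_union] at this
      exact this
    · rw [Finset.card_image_of_injective _ σ.injective,
        Finset.card_image_of_injective _ (srt i σ).injective]
  -- image of A i under σ is recoverable: on the fiber of srt i, σ ↦ (A i).image σ is injective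
  have hfiber : ∀ (i : Fin n) (σ₁ σ₂ : Equiv.Perm β), srt i σ₁ = srt i σ₂ →
      (A i).image σ₁ = (A i).image σ₂ → σ₁ = σ₂ := by
    intro i σ₁ σ₂ hs himg
    have hV : (A i ∪ B i).image σ₁ = (A i ∪ B i).image σ₂ := by
      rw [← himgV i σ₁, ← himgV i σ₂, hs]
    have hBimg : (B i).image σ₁ = (B i).image σ₂ := by
      have h1 : ∀ σ : Equiv.Perm β,
          (B i).image σ = ((A i ∪ B i).image σ) \ ((A i).image σ) := by
        intro σ
        rw [Finset.image_union, Finset.union_sdiff_cancel_left (hdImg i σ)]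
      rw [h1 σ₁, h1 σ₂, hV, himg]
    have hρ : sortPerm ((A i).image σ₁) ((B i).image σ₁) (hdImg i σ₁)
        = sortPerm ((A i).image σ₂) ((B i).image σ₂) (hdImg i σ₂) := by
      congr 1
    ext x
    have hx : (srt i σ₁) x = (srt i σ₂) x := by rw [hs]
    rw [hsrt] at hx
    simp only [Equiv.trans_apply] at hx
    rw [hρ] at hx
    exact (sortPerm ((A i).image σ₂) ((B i).image σ₂) (hdImg i σ₂)).injective hx
  -- each E i is large
  have hbig : ∀ i, Fintype.card (Equiv.Perm β) ≤ (E i).card * C := by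
    intro i
    by_contra hcon
    push_neg at hcon
    obtain ⟨τ, hτE, hτ⟩ := Finset.exists_lt_card_fiber_of_mul_lt_card_of_maps_to
      (fun σ _ => hsrtE i σ) (by rw [Finset.card_univ]; exact hcon)
    set fib := Finset.univ.filter (fun σ => srt i σ = τ) with hfib
    have hmap : ∀ σ ∈ fib, (A i).image σ ∈ ((A i ∪ B i).image τ).powersetCard m := by
      intro σ hσ
      rw [hfib, Finset.mem_filter] at hσ
      rw [Finset.mem_powersetCard]
      constructor
      · rw [← hσ.2, himgV i σ]
        exact Finset.image_subset_image Finset.subset_union_left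
      · rw [Finset.card_image_of_injective _ σ.injective, hA i]
    have hinj : Set.InjOn (fun σ : Equiv.Perm β => (A i).image σ) (fib : Set (Equiv.Perm β)) := by
      intro σ₁ h₁ σ₂ h₂ him
      rw [hfib, Finset.mem_coe, Finset.mem_filter] at h₁ h₂
      exact hfiber i σ₁ σ₂ (h₁.2.trans h₂.2.symm) him
    have hcard1 : fib.card ≤ (((A i ∪ B i).image τ).powersetCard m).card :=
      Finset.card_le_card_of_injOn _ hmap hinj
    rw [Finset.card_powersetCard] at hcard1
    have hcard2 : ((A i ∪ B i).image τ).card ≤ 2 * m := by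
      rw [Finset.card_image_of_injective _ τ.injective,
        Finset.card_union_of_disjoint (hd i), hA i]
      have := hB i
      omega
    have : fib.card ≤ C := hcard1.trans (Nat.choose_le_choose m hcard2)
    omega
  -- the events are disjoint
  have hEdisj : ∀ i ∈ (Finset.univ : Finset (Fin n)), ∀ j ∈ Finset.univ, i ≠ j →
      Disjoint (E i) (E j) := by
    intro i _ j _ hij
    rw [Finset.disjoint_left]
    intro σ hσi hσj
    obtain ⟨x, hx⟩ := hcross i j hij
    obtain ⟨y, hy⟩ := hcross j i hij.symm
    rw [hE, Finset.mem_filter] at hσi hσj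
    exact lt_asymm (hσi.2 x hx.1 y hy.2) (hσj.2 y hy.1 x hx.2)
  have hsum : ∑ i : Fin n, (E i).card ≤ Fintype.card (Equiv.Perm β) := by
    rw [← Finset.card_biUnion hEdisj]
    exact (Finset.card_le_card (Finset.subset_univ _)).trans_eq Finset.card_univ
  have hfinal : n * Fintype.card (Equiv.Perm β) ≤ C * Fintype.card (Equiv.Perm β) := by
    calc n * Fintype.card (Equiv.Perm β)
        = ∑ _i : Fin n, Fintype.card (Equiv.Perm β) := by
          rw [Finset.sum_const, Finset.card_univ, Fintype.card_fin, smul_eq_mul]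
      _ ≤ ∑ i : Fin n, (E i).card * C := Finset.sum_le_sum (fun i _ => hbig i)
      _ = (∑ i : Fin n, (E i).card) * C := by rw [Finset.sum_mul]
      _ ≤ Fintype.card (Equiv.Perm β) * C := Nat.mul_le_mul_right C hsum
      _ = C * Fintype.card (Equiv.Perm β) := Nat.mul_comm _ _
  exact Nat.le_of_mul_le_mul_right hfinal Fintype.card_pos

end Stmt3Aux
namespace Stmt3Aux

set_option maxHeartbeats 1000000 in
/-- Bollobás-type inequality over an arbitrary type. -/
lemma bollobas {α : Type*} [DecidableEq α] {m n : ℕ} (A B : Fin n → Finset α)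
    (hA : ∀ i, (A i).card = m) (hB : ∀ i, (B i).card ≤ m)
    (hd : ∀ i, Disjoint (A i) (B i))
    (hcross : ∀ i j, i ≠ j → ((A i) ∩ (B j)).Nonempty) :
    n ≤ (2 * m).choose m := by
  classical
  set X : Finset α := Finset.univ.biUnion (fun i => A i ∪ B i) with hX
  have hsubA : ∀ i, A i ⊆ X := fun i =>
    Finset.subset_union_left.trans
      (Finset.subset_biUnion_of_mem (fun i => A i ∪ B i) (Finset.mem_univ i))
  have hsubB : ∀ i, B i ⊆ X := fun i =>
    Finset.subset_union_right.trans
      (Finset.subset_biUnion_of_mem (fun i => A i ∪ B i) (Finset.mem_univ i))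
  set e : {x // x ∈ X} ≃ Fin X.card := X.equivFin with he
  have hval : Function.Injective (fun p : {x // x ∈ X} => e p) := e.injective
  set fA : Fin n → Finset (Fin X.card) :=
    fun i => (A i).attach.image (fun p => e ⟨p.1, hsubA i p.2⟩) with hfA
  set fB : Fin n → Finset (Fin X.card) :=
    fun i => (B i).attach.image (fun p => e ⟨p.1, hsubB i p.2⟩) with hfB
  have hmemA : ∀ i (x : Fin X.card), x ∈ fA i ↔ ∃ a, ∃ h : a ∈ A i, e ⟨a, hsubA i h⟩ = x := by
    intro i x
    rw [hfA]
    simp only [Finset.mem_image, Finset.mem_attach, true_and, Subtype.exists]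
  have hmemB : ∀ i (x : Fin X.card), x ∈ fB i ↔ ∃ a, ∃ h : a ∈ B i, e ⟨a, hsubB i h⟩ = x := by
    intro i x
    rw [hfB]
    simp only [Finset.mem_image, Finset.mem_attach, true_and, Subtype.exists]
  have hcardA : ∀ i, (fA i).card = m := by
    intro i
    rw [hfA]
    rw [Finset.card_image_of_injective _ (fun p q hpq => by
      have h := congrArg Subtype.val (e.injective hpq)
      exact Subtype.ext h)]
    rw [Finset.card_attach, hA i]
  have hcardB : ∀ i, (fB i).card ≤ m := by
    intro i
    rw [hfB]
    rw [Finset.card_image_of_injective _ (fun p q hpq => by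
      have h := congrArg Subtype.val (e.injective hpq)
      exact Subtype.ext h)]
    rw [Finset.card_attach]
    exact hB i
  have hdf : ∀ i, Disjoint (fA i) (fB i) := by
    intro i
    refine Finset.disjoint_left.2 ?_
    intro y hy hy'
    obtain ⟨a, ha, hae⟩ := (hmemA i y).1 hy
    obtain ⟨b, hb, hbe⟩ := (hmemB i y).1 hy'
    have h2 := congrArg Subtype.val (e.injective (hae.trans hbe.symm))
    have h3 : a = b := h2
    exact Finset.disjoint_left.1 (hd i) ha (h3 ▸ hb)
  have hcrossf : ∀ i j, i ≠ j → ∃ y, y ∈ fA i ∧ y ∈ fB j := by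
    intro i j hij
    obtain ⟨x, hx⟩ := hcross i j hij
    rw [Finset.mem_inter] at hx
    exact ⟨e ⟨x, hsubA i hx.1⟩, (hmemA i _).2 ⟨x, hx.1, rfl⟩, (hmemB j _).2 ⟨x, hx.2, rfl⟩⟩
  clear hX he hfA hfB hmemA hmemB hval
  clear_value fA fB
  clear hsubA hsubB e
  clear_value X
  exact bollobas_core fA fB hcardA hcardB hdf hcrossf

end Stmt3Aux
namespace Stmt3Aux

set_option maxHeartbeats 1000000 in
/-- Every member of a family with property P admits a small disjoint transversal of the others. -/
lemma exists_transversal {α : Type*} [DecidableEq α] {m : ℕ}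
    (F : Finset (Finset α)) (hcard : ∀ A ∈ F, A.card = m)
    (hP : ∀ k : ℕ, 1 ≤ k → ∀ f : Fin k → Finset α, (∀ i, f i ∈ F) →
      ∃ j : Fin k, ((f j) \ (Finset.univ.erase j).biUnion f).card ≤ m / k)
    (A : Finset α) (hA : A ∈ F) :
    ∃ T : Finset α, T.card ≤ m ∧ Disjoint A T ∧
      ∀ A' ∈ F, A' ≠ A → (A' ∩ T).Nonempty := by
  classical
  set 𝒯 : Finset (Finset α) := (F.biUnion id).powerset.filter
    (fun T => Disjoint A T ∧ ∀ A' ∈ F, A' ≠ A → ((A' \ A) ∩ T).Nonempty) with h𝒯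
  have hT₀ : F.biUnion (fun A' => A' \ A) ∈ 𝒯 := by
    rw [h𝒯, Finset.mem_filter]
    refine ⟨Finset.mem_powerset.2 ?_, ?_, ?_⟩
    · intro x hx
      obtain ⟨A', hA', hxA'⟩ := Finset.mem_biUnion.1 hx
      exact Finset.mem_biUnion.2 ⟨A', hA', (Finset.mem_sdiff.1 hxA').1⟩
    · rw [Finset.disjoint_right]
      intro x hx
      obtain ⟨A', hA', hxA'⟩ := Finset.mem_biUnion.1 hx
      exact (Finset.mem_sdiff.1 hxA').2
    · intro A' hA' hne
      have hnonempty : (A' \ A).Nonempty := by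
        rw [Finset.sdiff_nonempty]
        intro hsub
        exact hne (Finset.eq_of_subset_of_card_le hsub
          (by rw [hcard A hA, hcard A' hA']))
      obtain ⟨x, hx⟩ := hnonempty
      exact ⟨x, Finset.mem_inter.2 ⟨hx, Finset.mem_biUnion.2 ⟨A', hA', hx⟩⟩⟩
  obtain ⟨T, hT, hTmin⟩ := Finset.exists_min_image 𝒯 Finset.card ⟨_, hT₀⟩
  rw [h𝒯, Finset.mem_filter] at hT
  obtain ⟨hTpow, hTdisj, hTtrans⟩ := hT
  refine ⟨T, ?_, hTdisj, fun A' hA' hne => ?_⟩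
  swap
  · obtain ⟨x, hx⟩ := hTtrans A' hA' hne
    rw [Finset.mem_inter, Finset.mem_sdiff] at hx
    exact ⟨x, Finset.mem_inter.2 ⟨hx.1.1, hx.2⟩⟩
  -- now the size bound
  by_contra hbig
  push_neg at hbig
  -- minimality: erasing any element breaks the transversal property
  have hprivate : ∀ t ∈ T, ∃ A', A' ∈ F ∧ A' ≠ A ∧ (A' \ A) ∩ T = {t} := by
    intro t ht
    have herase : T.erase t ∉ 𝒯 := by
      intro hmem
      have := hTmin _ hmem
      have := Finset.card_erase_lt_of_mem ht
      omega
    rw [h𝒯, Finset.mem_filter] at herase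
    push_neg at herase
    have h1 : T.erase t ∈ (F.biUnion id).powerset :=
      Finset.mem_powerset.2 ((Finset.erase_subset _ _).trans (Finset.mem_powerset.1 hTpow))
    have h2 : Disjoint A (T.erase t) :=
      hTdisj.mono_right (Finset.erase_subset _ _)
    obtain ⟨A', hA', hne, hempty⟩ := herase h1 h2
    refine ⟨A', hA', hne, ?_⟩
    apply Finset.Subset.antisymm
    · intro x hx
      rw [Finset.mem_singleton]
      by_contra hxt
      have : x ∈ (A' \ A) ∩ T.erase t := by
        rw [Finset.mem_inter] at hx ⊢
        exact ⟨hx.1, Finset.mem_erase.2 ⟨hxt, hx.2⟩⟩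
      rw [hempty] at this
      exact absurd this (Finset.notMem_empty x)
    · intro x hx
      rw [Finset.mem_singleton] at hx
      subst hx
      obtain ⟨y, hy⟩ := hTtrans A' hA' hne
      have hyx : y = x := by
        by_contra hyx
        have : y ∈ (A' \ A) ∩ T.erase x := by
          rw [Finset.mem_inter] at hy ⊢
          exact ⟨hy.1, Finset.mem_erase.2 ⟨hyx, hy.2⟩⟩
        rw [hempty] at this
        exact absurd this (Finset.notMem_empty y)
      exact hyx ▸ hy
  choose w hwF hwne hwT using hprivate
  -- pick m+1 distinct elements of T
  obtain ⟨t', ht'sub, ht'card⟩ := Finset.exists_subset_card_eq (hbig : m + 1 ≤ T.card)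
  set ι : Fin (m + 1) → α := fun i => (t'.equivFin.symm (Fin.cast ht'card.symm i) : α) with hι
  have hιT : ∀ i, ι i ∈ T := fun i => ht'sub (t'.equivFin.symm _).2
  have hιinj : Function.Injective ι := by
    intro i j hij
    have := Subtype.ext hij
    have h2 := t'.equivFin.symm.injective this
    exact Fin.cast_injective _ h2
  set g : Fin (m + 1) → Finset α := fun i => w (ι i) (hιT i) with hg
  obtain ⟨j, hj⟩ := hP (m + 1) (Nat.le_add_left 1 m) g (fun i => hwF _ _)
  rw [Nat.div_eq_of_lt (Nat.lt_succ_self m)] at hj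
  have hjmem : ι j ∈ g j \ (Finset.univ.erase j).biUnion g := by
    rw [Finset.mem_sdiff]
    constructor
    · have : ι j ∈ (g j \ A) ∩ T := by rw [hg, hwT]; exact Finset.mem_singleton_self _
      exact (Finset.mem_sdiff.1 (Finset.mem_inter.1 this).1).1
    · intro hmem
      obtain ⟨i, hi, hmem'⟩ := Finset.mem_biUnion.1 hmem
      have hine : i ≠ j := (Finset.mem_erase.1 hi).1
      have hnotA : ι j ∉ A := by
        have : ι j ∈ (g j \ A) ∩ T := by rw [hg, hwT]; exact Finset.mem_singleton_self _
        exact (Finset.mem_sdiff.1 (Finset.mem_inter.1 this).1).2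
      have : ι j ∈ (g i \ A) ∩ T :=
        Finset.mem_inter.2 ⟨Finset.mem_sdiff.2 ⟨hmem', hnotA⟩, hιT j⟩
      rw [hg, hwT] at this
      have := Finset.mem_singleton.1 this
      exact hine (hιinj this.symm ▸ rfl)
  have : 0 < (g j \ (Finset.univ.erase j).biUnion g).card :=
    Finset.card_pos.2 ⟨_, hjmem⟩
  omega

end Stmt3Aux
theorem stmt_3 {α : Type*} [DecidableEq α] (m : ℕ)
    (F : Finset (Finset α)) (hcard : ∀ A ∈ F, A.card = m)
    (hP : ∀ k : ℕ, 1 ≤ k → ∀ f : Fin k → Finset α, (∀ i, f i ∈ F) →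
      ∃ j : Fin k, ((f j) \ (Finset.univ.erase j).biUnion f).card ≤ m / k) :
    (¬ ∃ g : Fin (m + 1) → Finset α,
      Function.Injective g ∧ (∀ i, g i ∈ F) ∧ DisjRep g) ∧
    F.card ≤ Nat.choose (2 * m) m := by
  constructor
  · rintro ⟨g, hginj, hgF, x, hx⟩
    obtain ⟨j, hj⟩ := hP (m + 1) (Nat.le_add_left 1 m) g hgF
    rw [Nat.div_eq_of_lt (Nat.lt_succ_self m)] at hj
    have hjmem : x j ∈ g j \ (Finset.univ.erase j).biUnion g := by
      rw [Finset.mem_sdiff]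
      refine ⟨(hx j j).2 rfl, ?_⟩
      intro hmem
      obtain ⟨i, hi, hmem'⟩ := Finset.mem_biUnion.1 hmem
      exact (Finset.mem_erase.1 hi).1 ((hx j i).1 hmem').symm
    have : 0 < (g j \ (Finset.univ.erase j).biUnion g).card :=
      Finset.card_pos.2 ⟨_, hjmem⟩
    omega
  · set e : {A // A ∈ F} ≃ Fin F.card := F.equivFin with he
    set AA : Fin F.card → Finset α := fun i => (e.symm i : Finset α) with hAA
    have hAF : ∀ i, AA i ∈ F := fun i => (e.symm i).2
    have hAcard : ∀ i, (AA i).card = m := fun i => hcard _ (hAF i)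
    have hAne : ∀ i j, i ≠ j → AA i ≠ AA j := by
      intro i j hij hAij
      exact hij (e.symm.injective (Subtype.ext hAij) ▸ rfl)
    choose Bf hB1 hB2 hB3 using fun i =>
      Stmt3Aux.exists_transversal F hcard hP (AA i) (hAF i)
    exact Stmt3Aux.bollobas AA Bf hAcard hB1 hB2
      (fun i j hij => hB3 j (AA i) (hAF i) (hAne i j hij))
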